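/- With the notation U_{ij} = A_{2i} + B_{1j}, V_{ij} = A_{1i} + B_{2j}, W_{ij} = A_{2i}ᵀA_{1i} + B_{1j}ᵀB_{2j} over a commutative ring R (columns split in halves, m even), let d_{ij} = U_{ij}ᵀV_{ij} − W_{ij} = (AᵀB)_{ij}. Then for all i < j: d_{ij} + d_{ji} = (U_{ii}+U_{jj})ᵀ(V_{ii}+V_{jj}) − (W_{ii}+W_{jj}) + 2·U_{ij}ᵀV_{ij} − U_{ij}ᵀ(V_{ii}+V_{jj}) − (U_{ii}+U_{jj})ᵀV_{ij}. In particular, if AᵀB is symmetric and 2 is invertible in R, then d_{ij} is determined by the diagonal data {U_{ii}, V_{ii}, W_{ii}} together with the off-diagonal pair (U_{ij}, V_{ij}) alone, without W_{ij}. -/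

import Mathlib

open Matrix

/-- Symmetric recursive scheme: with `d_{ij} = U_{ij}ᵀV_{ij} − W_{ij} = (AᵀB)_{ij}`,
for `i < j` one has
`d_{ij} + d_{ji} = (U_{ii}+U_{jj})ᵀ(V_{ii}+V_{jj}) − (W_{ii}+W_{jj}) + 2U_{ij}ᵀV_{ij}
 − U_{ij}ᵀ(V_{ii}+V_{jj}) − (U_{ii}+U_{jj})ᵀV_{ij}`;
if `AᵀB` is symmetric and `2` is invertible, `d_{ij}` equals half that expression. -/
theorem stmt17 (R : Type) [CommRing R] (k l : ℕ)
    (A₁ A₂ B₁ B₂ : Matrix (Fin k) (Fin l) R) :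
    let U : Fin l → Fin l → (Fin k → R) := fun i j r => A₂ r i + B₁ r j
    let V : Fin l → Fin l → (Fin k → R) := fun i j r => A₁ r i + B₂ r j
    let W : Fin l → Fin l → R := fun i j =>
      dotProduct (fun r => A₂ r i) (fun r => A₁ r i)
        + dotProduct (fun r => B₁ r j) (fun r => B₂ r j)
    let d : Fin l → Fin l → R := fun i j => dotProduct (U i j) (V i j) - W i j
    (∀ i j : Fin l, d i j = ((Matrix.fromRows A₁ A₂)ᵀ * Matrix.fromRows B₁ B₂) i j) ∧
    (∀ i j : Fin l, i < j →
      d i j + d j i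
        = dotProduct (U i i + U j j) (V i i + V j j) - (W i i + W j j)
          + 2 * dotProduct (U i j) (V i j)
          - dotProduct (U i j) (V i i + V j j)
          - dotProduct (U i i + U j j) (V i j)) ∧
    (((Matrix.fromRows A₁ A₂)ᵀ * Matrix.fromRows B₁ B₂)ᵀ
        = (Matrix.fromRows A₁ A₂)ᵀ * Matrix.fromRows B₁ B₂ →
      ∀ _inst : Invertible (2 : R), ∀ i j : Fin l, i < j →
        d i j = _inst.invOf *
          (dotProduct (U i i + U j j) (V i i + V j j) - (W i i + W j j)
            + 2 * dotProduct (U i j) (V i j)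
            - dotProduct (U i j) (V i i + V j j)
            - dotProduct (U i i + U j j) (V i j))) := by
  intro U V W d
  have h1 : ∀ i j : Fin l, d i j = ((Matrix.fromRows A₁ A₂)ᵀ * Matrix.fromRows B₁ B₂) i j := by
    intro i j
    simp only [d, U, V, W, dotProduct, Matrix.mul_apply, Matrix.transpose_apply,
      Matrix.fromRows, Fintype.sum_sum_type, Matrix.of_apply, mul_add, add_mul,
      Finset.sum_add_distrib]
    simp [mul_comm]
    change _ = ∑ a, A₁ a i * B₁ a j + ∑ a, A₂ a i * B₂ a j
    ring
  have h2 : ∀ i j : Fin l, i < j →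
      d i j + d j i
        = dotProduct (U i i + U j j) (V i i + V j j) - (W i i + W j j)
          + 2 * dotProduct (U i j) (V i j)
          - dotProduct (U i j) (V i i + V j j)
          - dotProduct (U i i + U j j) (V i j) := by
    intro i j _
    simp only [d, U, V, W, dotProduct, Pi.add_apply, mul_add, add_mul,
      Finset.sum_add_distrib]
    ring
  refine ⟨h1, h2, ?_⟩
  intro hS inst i j hij
  have hd : d j i = d i j := by
    rw [h1, h1]
    exact (congrFun (congrFun hS j) i).symm ▸ (Matrix.transpose_apply _ j i ▸ rfl)
  have := h2 i j hij
  rw [hd, ← two_mul] at this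
  rw [← this, ← mul_assoc, invOf_mul_self, one_mul]
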